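/- Repair of conjunctions of positive constraints: let C_1, …, C_n be finite directed multigraphs and for each i let P_i be a binary relation on directed multigraphs that is total (for every G there is H with P_i G H), increasing (P_i G H implies there exists an injective morphism G → H), and a repair relation for the positive constraint ∃C_i (P_i G H implies there exists an injective morphism C_i → H). Then the sequential composition P_1 ; … ; P_n is total, and whenever (P_1 ; … ; P_n) G H there exists an injective morphism C_i → H for every i = 1, …, n. -/

import Mathlib

/-- A directed multigraph: a set of nodes, a set of edges, and source/target maps. -/
structure DiMultigraph : Type 1 where
  V : Type
  E : Type
  s : E → V
  t : E → V

/-- A morphism of directed multigraphs: maps on nodes and edges compatible with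
sources and targets. -/
structure GraphHom (G H : DiMultigraph) : Type where
  fV : G.V → H.V
  fE : G.E → H.E
  src : ∀ e, H.s (fE e) = fV (G.s e)
  tgt : ∀ e, H.t (fE e) = fV (G.t e)

/-- Composition of graph morphisms. -/
def GraphHom.comp {G H K : DiMultigraph} (g : GraphHom H K) (f : GraphHom G H) :
    GraphHom G K where
  fV := g.fV ∘ f.fV
  fE := g.fE ∘ f.fE
  src e := by simp [g.src, f.src]
  tgt e := by simp [g.tgt, f.tgt]

/-- A graph morphism is injective if it is injective on nodes and on edges. -/
def GraphHom.Injective {G H : DiMultigraph} (f : GraphHom G H) : Prop :=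
  Function.Injective f.fV ∧ Function.Injective f.fE

/-- A graph is finite if its node set and edge set are finite. -/
def DiMultigraph.Finite (G : DiMultigraph) : Prop :=
  _root_.Finite G.V ∧ _root_.Finite G.E

/-- Sequential (relational) composition of a list of binary relations. -/
def SeqComp {X : Type*} : List (X → X → Prop) → (X → X → Prop)
  | [] => fun G H => G = H
  | P :: Ps => fun G H => ∃ M, P G M ∧ SeqComp Ps M H

def GraphHom.id (G : DiMultigraph) : GraphHom G G where
  fV := _root_.id
  fE := _root_.id
  src _ := rfl
  tgt _ := rfl

theorem GraphHom.id_injective (G : DiMultigraph) : (GraphHom.id G).Injective :=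
  ⟨fun _ _ h => h, fun _ _ h => h⟩

theorem GraphHom.comp_injective {G H K : DiMultigraph} {g : GraphHom H K} {f : GraphHom G H}
    (hg : g.Injective) (hf : f.Injective) : (g.comp f).Injective :=
  ⟨hg.1.comp hf.1, hg.2.comp hf.2⟩

theorem aux_repair {n : ℕ} (C : Fin n → DiMultigraph)
    (P : Fin n → DiMultigraph → DiMultigraph → Prop)
    (htotal : ∀ i, ∀ G, ∃ H, P i G H)
    (hinc : ∀ i, ∀ G H, P i G H → ∃ m : GraphHom G H, m.Injective)
    (hrepair : ∀ i, ∀ G H, P i G H → ∃ q : GraphHom (C i) H, q.Injective) :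
    (∀ G, ∃ H, SeqComp (List.ofFn P) G H) ∧
    (∀ G H, SeqComp (List.ofFn P) G H → ∃ m : GraphHom G H, m.Injective) ∧
    (∀ G H, SeqComp (List.ofFn P) G H →
      ∀ i, ∃ q : GraphHom (C i) H, q.Injective) := by
  induction n with
  | zero =>
    refine ⟨fun G => ⟨G, by simp [SeqComp]⟩, ?_, ?_⟩
    · intro G H h
      simp only [List.ofFn_zero, SeqComp] at h
      exact h ▸ ⟨GraphHom.id G, GraphHom.id_injective G⟩
    · intro G H h i
      exact absurd i.2 (by omega)
  | succ m ih =>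
    obtain ⟨ihtot, ihinc, ihrep⟩ := ih (fun i => C i.succ) (fun i => P i.succ)
      (fun i => htotal i.succ) (fun i => hinc i.succ) (fun i => hrepair i.succ)
    have seq_iff : ∀ G H, SeqComp (List.ofFn P) G H ↔
        ∃ M, P 0 G M ∧ SeqComp (List.ofFn fun i => P i.succ) M H := by
      intro G H
      rw [List.ofFn_succ]
      rfl
    refine ⟨?_, ?_, ?_⟩
    · intro G
      obtain ⟨M, hM⟩ := htotal 0 G
      obtain ⟨H, hH⟩ := ihtot M
      exact ⟨H, (seq_iff G H).2 ⟨M, hM, hH⟩⟩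
    · intro G H h
      obtain ⟨M, hM, hrest⟩ := (seq_iff G H).1 h
      obtain ⟨f, hf⟩ := hinc 0 G M hM
      obtain ⟨g, hg⟩ := ihinc M H hrest
      exact ⟨g.comp f, GraphHom.comp_injective hg hf⟩
    · intro G H h i
      obtain ⟨M, hM, hrest⟩ := (seq_iff G H).1 h
      rcases Fin.eq_zero_or_eq_succ i with rfl | ⟨j, rfl⟩
      · obtain ⟨q, hq⟩ := hrepair 0 G M hM
        obtain ⟨g, hg⟩ := ihinc M H hrest
        exact ⟨g.comp q, GraphHom.comp_injective hg hq⟩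
      · exact ihrep M H hrest j

/-- Repair of conjunctions of positive constraints: if each `P i` is total,
increasing, and a repair relation for the positive constraint `∃ C i`, then the
sequential composition `P 0 ; … ; P (n-1)` is total and every result `H` admits an
injective morphism from every `C i`. -/
theorem positive_conjunction_repair {n : ℕ} (C : Fin n → DiMultigraph)
    (hC : ∀ i, (C i).Finite)
    (P : Fin n → DiMultigraph → DiMultigraph → Prop)
    (htotal : ∀ i, ∀ G, ∃ H, P i G H)
    (hinc : ∀ i, ∀ G H, P i G H → ∃ m : GraphHom G H, m.Injective)
    (hrepair : ∀ i, ∀ G H, P i G H → ∃ q : GraphHom (C i) H, q.Injective) :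
    (∀ G, ∃ H, SeqComp (List.ofFn P) G H) ∧
    (∀ G H, SeqComp (List.ofFn P) G H →
      ∀ i, ∃ q : GraphHom (C i) H, q.Injective) := by
  have main := aux_repair (n := n) C P htotal hinc hrepair
  exact ⟨main.1, main.2.2⟩
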